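/- Let A be an associative algebra over a field k, let λ ∈ k, and let R : A → A be a Rota–Baxter operator of weight λ. Then for every t ≥ 1 and all b₁, …, b_t ∈ A, R(b₁)·R(b₂)···R(b_t) = R( Σ_{∅ ≠ S ⊆ {1,…,t}} λ^{|S|−1} · ∏_{i=1}^{t} c_i^S ), where the product ∏_{i=1}^{t} c_i^S is taken in the order i = 1, …, t and c_i^S = b_i if i ∈ S, while c_i^S = R(b_i) if i ∉ S. -/

import Mathlib

open Finset

section RB
variable {k A : Type*} [Field k] [Ring A] [Algebra k A]

def myP (R : A →ₗ[k] A) {t : ℕ} (b : Fin t → A) (S : Finset (Fin t)) : A :=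
  (List.ofFn fun i => if i ∈ S then b i else R (b i)).prod

lemma last_not_mem_map {t : ℕ} (T : Finset (Fin t)) :
    Fin.last t ∉ T.map Fin.castSuccEmb := by
  simp only [Finset.mem_map, Fin.coe_castSuccEmb, not_exists]
  exact fun i ⟨_, h⟩ => (Fin.castSucc_lt_last i).ne h

lemma castSucc_mem_map {t : ℕ} (T : Finset (Fin t)) (i : Fin t) :
    i.castSucc ∈ T.map Fin.castSuccEmb ↔ i ∈ T :=
  Finset.mem_map' _

lemma myP_map (R : A →ₗ[k] A) {t : ℕ} (b : Fin (t+1) → A) (T : Finset (Fin t)) :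
    myP R b (T.map Fin.castSuccEmb) =
      myP R (fun i => b i.castSucc) T * R (b (Fin.last t)) := by
  unfold myP
  rw [List.ofFn_succ', List.prod_concat]
  congr 1
  · refine congrArg _ (congrArg _ (funext fun i => ?_))
    simp only [castSucc_mem_map T i]
  · simp [last_not_mem_map T]

lemma myP_insert (R : A →ₗ[k] A) {t : ℕ} (b : Fin (t+1) → A) (T : Finset (Fin t)) :
    myP R b (insert (Fin.last t) (T.map Fin.castSuccEmb)) =
      myP R (fun i => b i.castSucc) T * b (Fin.last t) := by
  unfold myP
  rw [List.ofFn_succ', List.prod_concat]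
  congr 1
  · refine congrArg _ (congrArg _ (funext fun i => ?_))
    have h : (i.castSucc ∈ insert (Fin.last t) (T.map Fin.castSuccEmb)) ↔ i ∈ T := by
      rw [Finset.mem_insert, castSucc_mem_map]
      have : i.castSucc ≠ Fin.last t := (Fin.castSucc_lt_last i).ne
      simp [this]
    simp only [h]
  · simp

def mySum (lam : k) (R : A →ₗ[k] A) {t : ℕ} (b : Fin t → A) : A :=
  ∑ S ∈ Finset.univ.powerset.filter (fun S : Finset (Fin t) => S ≠ ∅),
      lam ^ (S.card - 1) • myP R b S

lemma powerset_map_eq {t : ℕ} :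
    ((univ : Finset (Fin t)).map Fin.castSuccEmb).powerset =
      (univ : Finset (Fin t)).powerset.map (Finset.mapEmbedding Fin.castSuccEmb).toEmbedding := by
  ext S
  simp only [Finset.mem_powerset, Finset.mem_map, RelEmbedding.coe_toEmbedding,
    Finset.mapEmbedding_apply, Finset.subset_map_iff]
  constructor
  · rintro ⟨u, hu, rfl⟩; exact ⟨u, hu, rfl⟩
  · rintro ⟨u, hu, rfl⟩; exact ⟨u, hu, rfl⟩

lemma mySum_succ (lam : k) (R : A →ₗ[k] A) {t : ℕ} (b : Fin (t+1) → A) :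
    mySum lam R b =
      mySum lam R (fun i => b i.castSucc) * R (b (Fin.last t))
        + myP R (fun i => b i.castSucc) (∅ : Finset (Fin t)) * b (Fin.last t)
        + lam • (mySum lam R (fun i => b i.castSucc) * b (Fin.last t)) := by
  set b' : Fin t → A := fun i => b i.castSucc with hb'
  set y := b (Fin.last t) with hy
  unfold mySum
  rw [Finset.sum_filter]
  rw [show (univ : Finset (Fin (t+1))) =
      insert (Fin.last t) ((univ : Finset (Fin t)).map Fin.castSuccEmb) by
    rw [Fin.univ_castSuccEmb, Finset.cons_eq_insert]]
  rw [Finset.sum_powerset_insert (last_not_mem_map _)]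
  rw [powerset_map_eq, Finset.sum_map, Finset.sum_map]
  have h1 : ∀ T ∈ (univ : Finset (Fin t)).powerset,
      (if ((Finset.mapEmbedding Fin.castSuccEmb).toEmbedding T ≠ ∅) then
        lam ^ (((Finset.mapEmbedding Fin.castSuccEmb).toEmbedding T).card - 1) •
          myP R b ((Finset.mapEmbedding Fin.castSuccEmb).toEmbedding T) else 0)
      = (if T ≠ ∅ then lam ^ (T.card - 1) • myP R b' T else 0) * R y := by
    intro T _
    simp only [RelEmbedding.coe_toEmbedding, Finset.mapEmbedding_apply, Finset.card_map,
      ne_eq, Finset.map_eq_empty, myP_map, ← hb', ← hy, smul_mul_assoc, ite_mul, zero_mul]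
  rw [Finset.sum_congr rfl h1, ← Finset.sum_mul, ← Finset.sum_filter]
  have h2 : ∀ T ∈ (univ : Finset (Fin t)).powerset,
      (if (insert (Fin.last t) ((Finset.mapEmbedding Fin.castSuccEmb).toEmbedding T) ≠ ∅) then
        lam ^ ((insert (Fin.last t) ((Finset.mapEmbedding Fin.castSuccEmb).toEmbedding T)).card - 1) •
          myP R b (insert (Fin.last t) ((Finset.mapEmbedding Fin.castSuccEmb).toEmbedding T)) else 0)
      = lam ^ T.card • (myP R b' T * y) := by
    intro T _
    simp only [RelEmbedding.coe_toEmbedding, Finset.mapEmbedding_apply]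
    simp only [ne_eq, Finset.insert_ne_empty, not_false_eq_true, ↓reduceIte]
    rw [Finset.card_insert_of_notMem (last_not_mem_map _), Finset.card_map, Nat.add_sub_cancel,
      myP_insert, ← hb', ← hy]
  rw [Finset.sum_congr rfl h2]
  have hempty : (∅ : Finset (Fin t)) ∈ (univ : Finset (Fin t)).powerset := by simp
  rw [← Finset.add_sum_erase _ _ hempty]
  have herase : ((univ : Finset (Fin t)).powerset).erase ∅ =
      (univ : Finset (Fin t)).powerset.filter (fun S => S ≠ ∅) := by
    rw [Finset.filter_ne']
  rw [herase]
  have h3 : ∀ T ∈ (univ : Finset (Fin t)).powerset.filter (fun S : Finset (Fin t) => S ≠ ∅),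
      lam ^ T.card • (myP R b' T * y) = lam • (lam ^ (T.card - 1) • (myP R b' T * y)) := by
    intro T hT
    have hTne : T ≠ ∅ := (Finset.mem_filter.1 hT).2
    have hc : T.card - 1 + 1 = T.card := Nat.succ_pred_eq_of_pos
      (Finset.card_pos.2 (Finset.nonempty_of_ne_empty hTne))
    conv_lhs => rw [← hc, pow_succ, mul_comm (lam ^ (T.card - 1)) lam, mul_smul]
  rw [Finset.sum_congr rfl h3, ← Finset.smul_sum]
  have h4 : ∀ T ∈ (univ : Finset (Fin t)).powerset.filter (fun S : Finset (Fin t) => S ≠ ∅),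
      lam ^ (T.card - 1) • (myP R b' T * y) = (lam ^ (T.card - 1) • myP R b' T) * y := by
    intro T _; rw [smul_mul_assoc]
  rw [Finset.sum_congr rfl h4, ← Finset.sum_mul]
  simp only [Finset.card_empty, pow_zero, one_smul]
  rw [add_assoc]

end RB

theorem stmt1 {k A : Type*} [Field k] [Ring A] [Algebra k A] (lam : k)
    (R : A →ₗ[k] A)
    (hR : ∀ x y : A, R x * R y = R (R x * y + x * R y + lam • (x * y)))
    (t : ℕ) (ht : 1 ≤ t) (b : Fin t → A) :
    (List.ofFn fun i => R (b i)).prod =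
      R (∑ S ∈ Finset.univ.powerset.filter (fun S : Finset (Fin t) => S ≠ ∅),
          lam ^ (S.card - 1) • (List.ofFn fun i => if i ∈ S then b i else R (b i)).prod) := by
  have key : ∀ t : ℕ, ∀ b : Fin t → A, 1 ≤ t →
      (List.ofFn fun i => R (b i)).prod = R (mySum lam R b) := by
    intro t
    induction t with
    | zero => intro b h; omega
    | succ n ih =>
      intro b _
      rcases Nat.eq_zero_or_pos n with hn | hn
      · subst hn
        simp only [mySum, myP]
        have : (Finset.univ.powerset.filter (fun S : Finset (Fin 1) => S ≠ ∅)) = {{0}} := by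
          decide
        rw [this, Finset.sum_singleton]
        simp
      · have hb' := ih (fun i => b i.castSucc) hn
        rw [List.ofFn_succ', List.prod_concat, hb', hR, mySum_succ]
        congr 1
        have he : myP R (fun i => b i.castSucc) (∅ : Finset (Fin n)) =
            R (mySum lam R (fun i => b i.castSucc)) := by
          rw [← hb']
          simp [myP]
        rw [he]
        abel
  simpa [mySum, myP] using key t b ht
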